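/- arXiv:math/0503448 — 2 statements merged into one kernel-verified Lean document; each statement's English description precedes it below -/
import Mathlib

section
/- For all matrices A ∈ ℤ_max^{r×n}, B ∈ ℤ_max^{n×p}, and C ∈ ℤ_max^{p×q}, one has vol(Im(ABC)) ≤ vol(Im B). -/
/-- The max-plus matrix–vector product over `ℤ_max = (ℤ ∪ {−∞}, max, +)`:
`(Ax)_i = max_j (A_{ij} + x_j)`. -/
def maxMulVec {m k : ℕ} (A : Matrix (Fin m) (Fin k) (WithBot ℤ))
    (x : Fin k → WithBot ℤ) : Fin m → WithBot ℤ :=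
  fun i => Finset.univ.sup fun j => A i j + x j

/-- The max-plus matrix product: `(AB)_{ij} = max_t (A_{it} + B_{tj})`. -/
def maxMatMul {m k l : ℕ} (A : Matrix (Fin m) (Fin k) (WithBot ℤ))
    (B : Matrix (Fin k) (Fin l) (WithBot ℤ)) : Matrix (Fin m) (Fin l) (WithBot ℤ) :=
  Matrix.of fun i j => Finset.univ.sup fun t => A i t + B t j

/-- `Im A`: the subsemimodule generated by the columns of `A`, i.e. the set of all
max-plus linear combinations `Ay` of the columns of `A`. -/
def ImM {m k : ℕ} (A : Matrix (Fin m) (Fin k) (WithBot ℤ)) : Set (Fin m → WithBot ℤ) :=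
  {v | ∃ y : Fin k → WithBot ℤ, v = maxMulVec A y}

/-- A subsemimodule of `ℤ_max^m`: contains `(−∞,…,−∞)`, is closed under entrywise max,
and under addition of a scalar `λ ∈ ℤ ∪ {−∞}` to all entries. -/
def IsSubsemimodule {m : ℕ} (X : Set (Fin m → WithBot ℤ)) : Prop :=
  (fun _ => ⊥) ∈ X ∧ (∀ x ∈ X, ∀ y ∈ X, x ⊔ y ∈ X) ∧
    ∀ (c : WithBot ℤ), ∀ x ∈ X, (fun i => c + x i) ∈ X

/-- The volume of a subset of `ℤ_max^m`: the cardinality (in `ℕ ∪ {∞}`) of the set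
of its elements `x` with `max_i x_i = 0`. -/
noncomputable def vol {m : ℕ} (X : Set (Fin m → WithBot ℤ)) : ℕ∞ :=
  {x ∈ X | Finset.univ.sup x = (0 : WithBot ℤ)}.encard

lemma add_finsetSup {k : ℕ} (c : WithBot ℤ) (f : Fin k → WithBot ℤ) :
    (Finset.univ.sup fun j => c + f j) = c + Finset.univ.sup f := by
  classical
  induction (Finset.univ : Finset (Fin k)) using Finset.induction_on with
  | empty => simp [WithBot.add_bot]
  | insert _ _ h ih =>
      rw [Finset.sup_insert, Finset.sup_insert, ih]
      exact max_add_add_left _ _ _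

lemma maxMulVec_scalar {m k : ℕ} (M : Matrix (Fin m) (Fin k) (WithBot ℤ))
    (c : WithBot ℤ) (y : Fin k → WithBot ℤ) :
    maxMulVec M (fun j => c + y j) = fun i => c + maxMulVec M y i := by
  funext i
  unfold maxMulVec
  rw [← add_finsetSup]
  congr 1; funext j
  rw [← add_assoc, add_comm (M i j) c, add_assoc]

lemma maxMulVec_assoc {m k l : ℕ} (M : Matrix (Fin m) (Fin k) (WithBot ℤ))
    (N : Matrix (Fin k) (Fin l) (WithBot ℤ)) (y : Fin l → WithBot ℤ) :
    maxMulVec (maxMatMul M N) y = maxMulVec M (maxMulVec N y) := by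
  funext i
  unfold maxMulVec maxMatMul
  simp only [Matrix.of_apply]
  trans Finset.univ.sup fun j => Finset.univ.sup fun t => M i t + N t j + y j
  · congr 1; funext j
    rw [add_comm _ (y j), ← add_finsetSup]
    congr 1; funext t; abel
  · rw [Finset.sup_comm]
    congr 1; funext t
    rw [← add_finsetSup]
    congr 1; funext j; abel

/-- For all matrices `A ∈ ℤ_max^{r×n}`, `B ∈ ℤ_max^{n×p}`, `C ∈ ℤ_max^{p×q}`,
`vol(Im(ABC)) ≤ vol(Im B)`. -/
theorem vol_imABC_le_vol_imB {r n p q : ℕ} (A : Matrix (Fin r) (Fin n) (WithBot ℤ))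
    (B : Matrix (Fin n) (Fin p) (WithBot ℤ)) (C : Matrix (Fin p) (Fin q) (WithBot ℤ)) :
    vol (ImM (maxMatMul (maxMatMul A B) C)) ≤ vol (ImM B) := by
  classical
  unfold vol
  set ABC := maxMatMul (maxMatMul A B) C with hABC
  have hx_eq : ∀ x (h : x ∈ ImM ABC),
      x = maxMulVec A (maxMulVec B (maxMulVec C h.choose)) := by
    intro x h
    have h2 : maxMulVec ABC h.choose = maxMulVec A (maxMulVec B (maxMulVec C h.choose)) :=
      (maxMulVec_assoc (maxMatMul A B) C h.choose).trans (maxMulVec_assoc A B _)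
    exact h.choose_spec.trans h2
  set zf : (Fin r → WithBot ℤ) → (Fin n → WithBot ℤ) := fun x =>
    if h : x ∈ ImM ABC then maxMulVec B (maxMulVec C h.choose) else fun _ => ⊥ with hzf
  set cf : (Fin r → WithBot ℤ) → WithBot ℤ := fun x =>
    ((-(WithBot.unbotD 0 (Finset.univ.sup (zf x))) : ℤ) : WithBot ℤ) with hcf
  set f : (Fin r → WithBot ℤ) → (Fin n → WithBot ℤ) := fun x i => cf x + zf x i with hf
  have main : ∀ x, x ∈ ImM ABC → Finset.univ.sup x = (0 : WithBot ℤ) →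
      (x = maxMulVec A (zf x)) ∧ (∃ k : ℤ, Finset.univ.sup (zf x) = (k : WithBot ℤ)) := by
    intro x h hsup
    have hx : x = maxMulVec A (zf x) := by
      rw [hzf]; simp only [dif_pos h]; exact hx_eq x h
    refine ⟨hx, ?_⟩
    rcases hsb : Finset.univ.sup (zf x) with _ | k
    · exfalso
      have hz : ∀ t, zf x t = ⊥ := by
        intro t
        have := Finset.le_sup (f := zf x) (Finset.mem_univ t)
        rw [hsb] at this
        exact le_bot_iff.mp this
      have hxbot : x = fun _ => ⊥ := by
        funext i; rw [hx]; unfold maxMulVec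
        simp [hz, WithBot.add_bot]
      rw [hxbot] at hsup
      simp at hsup
    · exact ⟨k, rfl⟩
  have cfval : ∀ x (k : ℤ), Finset.univ.sup (zf x) = (k : WithBot ℤ) →
      cf x = ((-k : ℤ) : WithBot ℤ) := by
    intro x k hk
    rw [hcf]; simp [hk]
  have supfx : ∀ x, Finset.univ.sup (f x) = cf x + Finset.univ.sup (zf x) := by
    intro x
    simp only [hf]
    exact add_finsetSup _ _
  apply Set.encard_le_encard_of_injOn (f := f)
  · rintro x ⟨hmem, hsup⟩
    obtain ⟨hx, k, hk⟩ := main x hmem hsup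
    constructor
    · -- f x ∈ ImM B
      have hzx : zf x = maxMulVec B (maxMulVec C (Exists.choose hmem)) := by
        simp only [hzf]; rw [dif_pos hmem]
      exact ⟨fun j => cf x + maxMulVec C hmem.choose j, by
        simp only [hf, hzx]; rw [maxMulVec_scalar]⟩
    · rw [supfx, hk, cfval x k hk]
      rw [← WithBot.coe_add]
      norm_num
  · rintro x1 ⟨h1, hs1⟩ x2 ⟨h2, hs2⟩ hfeq
    obtain ⟨hx1, k1, hk1⟩ := main x1 h1 hs1
    obtain ⟨hx2, k2, hk2⟩ := main x2 h2 hs2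
    have hA : (fun i => cf x1 + x1 i) = (fun i => cf x2 + x2 i) := by
      have e1 : maxMulVec A (f x1) = fun i => cf x1 + x1 i := by
        simp only [hf]; rw [maxMulVec_scalar, ← hx1]
      have e2 : maxMulVec A (f x2) = fun i => cf x2 + x2 i := by
        simp only [hf]; rw [maxMulVec_scalar, ← hx2]
      rw [← e1, ← e2, hfeq]
    have hc : cf x1 = cf x2 := by
      have h3 := congrArg (fun v => Finset.univ.sup v) hA
      rw [add_finsetSup, add_finsetSup, hs1, hs2, add_zero, add_zero] at h3
      exact h3
    have hcne : cf x1 ≠ ⊥ := by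
      rw [cfval x1 k1 hk1]; exact WithBot.coe_ne_bot
    funext i
    have := congrFun hA i
    rw [← hc] at this
    exact WithBot.add_left_cancel hcne this
end

section
/- Let K ⊆ ℤ_max^n be a subsemimodule with finite volume. Then for all A ∈ ℤ_max^{n×n} and B ∈ ℤ_max^{n×p}, the maximal geometrically (A,B)-invariant semimodule K* contained in K is finitely generated; moreover, defining X₁ = K and X_{r+1} = φ(X_r), there exists k ≤ vol(K)+1 with X_{k+1} = X_k and K* = X_k. -/
/-- The subsemimodule of `ℤ_max^m` generated by a set `G`: all max-plus linear
combinations of finitely many elements of `G`. -/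
def maxSpan {m : ℕ} (G : Set (Fin m → WithBot ℤ)) : Set (Fin m → WithBot ℤ) :=
  {x | ∃ (k : ℕ) (u : Fin k → Fin m → WithBot ℤ) (lam : Fin k → WithBot ℤ),
    (∀ i, u i ∈ G) ∧ x = fun j => Finset.univ.sup fun i => lam i + u i j}

/-- `Kstar A B K`: the set of initial states `x₀` for which some control sequence
`u(k)`, `k ≥ 1`, makes the trajectory `x(0) = x₀`, `x(k) = max(A x(k−1), B u(k))`
stay in `K` forever. -/
def KstarMax {n p : ℕ} (A : Matrix (Fin n) (Fin n) (WithBot ℤ))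
    (B : Matrix (Fin n) (Fin p) (WithBot ℤ)) (K : Set (Fin n → WithBot ℤ)) :
    Set (Fin n → WithBot ℤ) :=
  {x₀ | ∃ (u : ℕ → Fin p → WithBot ℤ) (x : ℕ → Fin n → WithBot ℤ),
    x 0 = x₀ ∧ (∀ k : ℕ, x (k + 1) = maxMulVec A (x k) ⊔ maxMulVec B (u (k + 1))) ∧
    ∀ k : ℕ, x k ∈ K}

/-- `φ(X) = X ∩ A⁻¹(X ⊖ Im B)`, where `A⁻¹(Y) = {u : Au ∈ Y}` and
`Z ⊖ Y = {u : ∃ y ∈ Y, max(u, y) ∈ Z}`. -/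
def PhiMax {n p : ℕ} (A : Matrix (Fin n) (Fin n) (WithBot ℤ))
    (B : Matrix (Fin n) (Fin p) (WithBot ℤ)) (X : Set (Fin n → WithBot ℤ)) :
    Set (Fin n → WithBot ℤ) :=
  X ∩ {u | maxMulVec A u ∈ {w | ∃ y ∈ ImM B, w ⊔ y ∈ X}}

/-- The sequence `X₁ = K`, `X_{r+1} = φ(X_r)`; here `XseqMax A B K r` is `X_{r+1}`,
so that `XseqMax A B K 0 = X₁ = K` and `X_k = XseqMax A B K (k−1)` for `k ≥ 1`. -/
def XseqMax {n p : ℕ} (A : Matrix (Fin n) (Fin n) (WithBot ℤ))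
    (B : Matrix (Fin n) (Fin p) (WithBot ℤ)) (K : Set (Fin n → WithBot ℤ)) :
    ℕ → Set (Fin n → WithBot ℤ)
  | 0 => K
  | r + 1 => PhiMax A B (XseqMax A B K r)


lemma wb_add_sup (c a b : WithBot ℤ) : c + (a ⊔ b) = (c + a) ⊔ (c + b) := by
  rcases le_total a b with h|h
  · rw [sup_of_le_right h, sup_of_le_right (add_le_add_right h c)]
  · rw [sup_of_le_left h, sup_of_le_left (add_le_add_right h c)]

lemma wb_sup_add {m : ℕ} (c : WithBot ℤ) (f : Fin m → WithBot ℤ) :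
    Finset.univ.sup (fun j => c + f j) = c + Finset.univ.sup f := by
  rw [Finset.comp_sup_eq_sup_comp (c + ·) (fun x y => wb_add_sup c x y)]
  · rfl
  · simp

lemma fin_sup_succ {k : ℕ} (f : Fin (k+1) → WithBot ℤ) :
    Finset.univ.sup f = f 0 ⊔ Finset.univ.sup (f ∘ Fin.succ) := by
  rw [Fin.univ_succ, Finset.sup_cons, Finset.sup_map]
  rfl

lemma maxMulVec_sup {m k : ℕ} (A : Matrix (Fin m) (Fin k) (WithBot ℤ))
    (x y : Fin k → WithBot ℤ) :
    maxMulVec A (x ⊔ y) = maxMulVec A x ⊔ maxMulVec A y := by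
  funext i
  simp only [maxMulVec, Pi.sup_apply]
  rw [← Finset.sup_sup]
  congr 1; funext j
  exact wb_add_sup _ _ _

lemma maxMulVec_smul {m k : ℕ} (A : Matrix (Fin m) (Fin k) (WithBot ℤ))
    (c : WithBot ℤ) (x : Fin k → WithBot ℤ) :
    maxMulVec A (fun j => c + x j) = fun i => c + maxMulVec A x i := by
  funext i
  simp only [maxMulVec]
  rw [← wb_sup_add]
  congr 1; funext j
  rw [← add_assoc, add_comm (A i j) c, add_assoc]

lemma maxMulVec_bot {m k : ℕ} (A : Matrix (Fin m) (Fin k) (WithBot ℤ)) :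
    maxMulVec A (fun _ => (⊥ : WithBot ℤ)) = fun _ => ⊥ := by
  funext i
  simp [maxMulVec]
lemma ImM_bot {m k : ℕ} (B : Matrix (Fin m) (Fin k) (WithBot ℤ)) :
    (fun _ => (⊥ : WithBot ℤ)) ∈ ImM B :=
  ⟨fun _ => ⊥, (maxMulVec_bot B).symm⟩

lemma ImM_sup {m k : ℕ} (B : Matrix (Fin m) (Fin k) (WithBot ℤ))
    {x y : Fin m → WithBot ℤ} (hx : x ∈ ImM B) (hy : y ∈ ImM B) : x ⊔ y ∈ ImM B := by
  obtain ⟨a, rfl⟩ := hx; obtain ⟨b, rfl⟩ := hy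
  exact ⟨a ⊔ b, (maxMulVec_sup B a b).symm⟩

lemma ImM_smul {m k : ℕ} (B : Matrix (Fin m) (Fin k) (WithBot ℤ))
    (c : WithBot ℤ) {x : Fin m → WithBot ℤ} (hx : x ∈ ImM B) :
    (fun i => c + x i) ∈ ImM B := by
  obtain ⟨a, rfl⟩ := hx
  exact ⟨fun j => c + a j, (maxMulVec_smul B c a).symm⟩

lemma PhiMax_subset {n p : ℕ} (A : Matrix (Fin n) (Fin n) (WithBot ℤ))
    (B : Matrix (Fin n) (Fin p) (WithBot ℤ)) (X : Set (Fin n → WithBot ℤ)) :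
    PhiMax A B X ⊆ X := Set.inter_subset_left

lemma PhiMax_subsemimodule {n p : ℕ} (A : Matrix (Fin n) (Fin n) (WithBot ℤ))
    (B : Matrix (Fin n) (Fin p) (WithBot ℤ)) {X : Set (Fin n → WithBot ℤ)}
    (hX : IsSubsemimodule X) : IsSubsemimodule (PhiMax A B X) := by
  obtain ⟨h0, hsup, hsmul⟩ := hX
  refine ⟨⟨h0, ?_⟩, ?_, ?_⟩
  · refine ⟨fun _ => ⊥, ImM_bot B, ?_⟩
    rw [maxMulVec_bot A]
    simpa using h0
  · rintro x ⟨hxX, yx, hyx, hx⟩ y ⟨hyX, yy, hyy, hy⟩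
    refine ⟨hsup x hxX y hyX, yx ⊔ yy, ImM_sup B hyx hyy, ?_⟩
    rw [maxMulVec_sup A]
    have : maxMulVec A x ⊔ maxMulVec A y ⊔ (yx ⊔ yy)
        = (maxMulVec A x ⊔ yx) ⊔ (maxMulVec A y ⊔ yy) := by
      rw [sup_assoc, sup_assoc]
      congr 1
      rw [← sup_assoc, ← sup_assoc, sup_comm yx (maxMulVec A y)]
    rw [this]
    exact hsup _ hx _ hy
  · rintro c x ⟨hxX, y, hyB, hx⟩
    refine ⟨hsmul c x hxX, fun i => c + y i, ImM_smul B c hyB, ?_⟩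
    rw [maxMulVec_smul A]
    have : ((fun i => c + maxMulVec A x i) ⊔ fun i => c + y i)
        = fun i => c + (maxMulVec A x ⊔ y) i := by
      funext i
      exact (wb_add_sup c _ _).symm
    rw [this]
    exact hsmul c _ hx

lemma Xseq_subsemimodule {n p : ℕ} (A : Matrix (Fin n) (Fin n) (WithBot ℤ))
    (B : Matrix (Fin n) (Fin p) (WithBot ℤ)) {K : Set (Fin n → WithBot ℤ)}
    (hK : IsSubsemimodule K) (r : ℕ) : IsSubsemimodule (XseqMax A B K r) := by
  induction r with
  | zero => exact hK
  | succ r ih => exact PhiMax_subsemimodule A B ih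

lemma Xseq_succ_subset {n p : ℕ} (A : Matrix (Fin n) (Fin n) (WithBot ℤ))
    (B : Matrix (Fin n) (Fin p) (WithBot ℤ)) (K : Set (Fin n → WithBot ℤ)) (r : ℕ) :
    XseqMax A B K (r + 1) ⊆ XseqMax A B K r := PhiMax_subset A B _

lemma Xseq_subset_K {n p : ℕ} (A : Matrix (Fin n) (Fin n) (WithBot ℤ))
    (B : Matrix (Fin n) (Fin p) (WithBot ℤ)) (K : Set (Fin n → WithBot ℤ)) (r : ℕ) :
    XseqMax A B K r ⊆ K := by
  induction r with
  | zero => exact subset_rfl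
  | succ r ih => exact (Xseq_succ_subset A B K r).trans ih
def unitSet {m : ℕ} (X : Set (Fin m → WithBot ℤ)) : Set (Fin m → WithBot ℤ) :=
  {x ∈ X | Finset.univ.sup x = (0 : WithBot ℤ)}

lemma vol_eq_encard {m : ℕ} (X : Set (Fin m → WithBot ℤ)) : vol X = (unitSet X).encard := rfl

lemma eq_bot_of_sup_bot {m : ℕ} {x : Fin m → WithBot ℤ}
    (h : Finset.univ.sup x = (⊥ : WithBot ℤ)) : x = fun _ => ⊥ := by
  funext j
  have := Finset.le_sup (f := x) (Finset.mem_univ j)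
  rw [h] at this
  exact le_bot_iff.mp this

lemma scaled_mem_unit {m : ℕ} {X : Set (Fin m → WithBot ℤ)} (hX : IsSubsemimodule X)
    {x : Fin m → WithBot ℤ} (hx : x ∈ X) {a : ℤ}
    (ha : Finset.univ.sup x = (a : WithBot ℤ)) :
    (fun j => ((-a : ℤ) : WithBot ℤ) + x j) ∈ unitSet X := by
  refine ⟨hX.2.2 _ x hx, ?_⟩
  rw [wb_sup_add, ha, ← WithBot.coe_add]
  norm_num

lemma unscale {m : ℕ} (a : ℤ) (x : Fin m → WithBot ℤ) :
    (fun j => (a : WithBot ℤ) + (((-a : ℤ) : WithBot ℤ) + x j)) = x := by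
  funext j
  rw [← add_assoc, ← WithBot.coe_add]
  norm_num

lemma eq_of_unit_eq {m : ℕ} {X Y : Set (Fin m → WithBot ℤ)}
    (hX : IsSubsemimodule X) (hY : IsSubsemimodule Y) (hXY : X ⊆ Y)
    (h : unitSet X = unitSet Y) : X = Y := by
  refine Set.Subset.antisymm hXY fun y hy => ?_
  rcases hs : Finset.univ.sup y with _ | a
  · rw [eq_bot_of_sup_bot hs]; exact hX.1
  · have hz : (fun j => ((-a : ℤ) : WithBot ℤ) + y j) ∈ unitSet Y :=
      scaled_mem_unit hY hy hs
    rw [← h] at hz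
    have := hX.2.2 ((a : ℤ) : WithBot ℤ) _ hz.1
    rwa [unscale a y] at this

lemma maxSpan_subset {m : ℕ} {X G : Set (Fin m → WithBot ℤ)} (hX : IsSubsemimodule X)
    (hG : G ⊆ X) : maxSpan G ⊆ X := by
  rintro x ⟨k, u, lam, hu, rfl⟩
  induction k with
  | zero =>
    have : (fun j => Finset.univ.sup fun i : Fin 0 => lam i + u i j)
        = fun _ => (⊥ : WithBot ℤ) := by
      funext j; simp
    rw [this]; exact hX.1
  | succ k ih =>
    have hsplit : (fun j => Finset.univ.sup fun i : Fin (k+1) => lam i + u i j)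
        = ((fun j => lam 0 + u 0 j) ⊔ fun j =>
            Finset.univ.sup fun i : Fin k => lam i.succ + u i.succ j) := by
      funext j
      rw [fin_sup_succ (fun i : Fin (k+1) => lam i + u i j)]
      rfl
    rw [hsplit]
    refine hX.2.1 _ (hX.2.2 _ _ (hG (hu 0))) _ (ih (fun i => u i.succ) (fun i => lam i.succ)
      (fun i => hu i.succ))

lemma eq_span_unit {m : ℕ} {X : Set (Fin m → WithBot ℤ)} (hX : IsSubsemimodule X) :
    X = maxSpan (unitSet X) := by
  refine Set.Subset.antisymm (fun x hx => ?_) (maxSpan_subset hX fun x hx => hx.1)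
  rcases hs : Finset.univ.sup x with _ | a
  · exact ⟨0, Fin.elim0, Fin.elim0, fun i => i.elim0, by
      rw [eq_bot_of_sup_bot hs]; funext j; simp⟩
  · refine ⟨1, fun _ => fun j => ((-a : ℤ) : WithBot ℤ) + x j, fun _ => ((a : ℤ) : WithBot ℤ),
      fun _ => scaled_mem_unit hX hx hs, ?_⟩
    funext j
    simp only [Finset.sup_const (Finset.univ_nonempty) _]
    exact (congrFun (unscale a x) j).symm
lemma Kstar_subset_Xseq {n p : ℕ} (A : Matrix (Fin n) (Fin n) (WithBot ℤ))
    (B : Matrix (Fin n) (Fin p) (WithBot ℤ)) (K : Set (Fin n → WithBot ℤ)) (r : ℕ) :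
    KstarMax A B K ⊆ XseqMax A B K r := by
  induction r with
  | zero => rintro x₀ ⟨u, x, rfl, hrec, hK'⟩; exact hK' 0
  | succ r ih =>
    rintro x₀ ⟨u, x, rfl, hrec, hK'⟩
    refine ⟨ih ⟨u, x, rfl, hrec, hK'⟩, maxMulVec B (u 1), ⟨u 1, rfl⟩, ?_⟩
    have hx1 : x 1 ∈ KstarMax A B K :=
      ⟨fun k => u (k+1), fun k => x (k+1), rfl, fun k => hrec (k+1), fun k => hK' (k+1)⟩
    have h1 : x 1 = maxMulVec A (x 0) ⊔ maxMulVec B (u 1) := hrec 0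
    have := ih hx1
    rwa [h1] at this

lemma fixed_subset_Kstar {n p : ℕ} (A : Matrix (Fin n) (Fin n) (WithBot ℤ))
    (B : Matrix (Fin n) (Fin p) (WithBot ℤ)) (K : Set (Fin n → WithBot ℤ)) {r : ℕ}
    (hfix : XseqMax A B K (r+1) = XseqMax A B K r) :
    XseqMax A B K r ⊆ KstarMax A B K := by
  set X := XseqMax A B K r with hXdef
  have step : ∀ v ∈ X, ∃ w : Fin p → WithBot ℤ, maxMulVec A v ⊔ maxMulVec B w ∈ X := by
    intro v hv
    have hv' : v ∈ PhiMax A B X := by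
      have : v ∈ XseqMax A B K (r+1) := hfix ▸ hv
      exact this
    obtain ⟨_, y, ⟨w, rfl⟩, hy⟩ := hv'
    exact ⟨w, hy⟩
  intro x₀ hx₀
  let F : {v // v ∈ X} → {v // v ∈ X} := fun v =>
    ⟨maxMulVec A v.1 ⊔ maxMulVec B (Classical.choose (step v.1 v.2)),
      Classical.choose_spec (step v.1 v.2)⟩
  let xs : ℕ → {v // v ∈ X} := fun k => Nat.rec ⟨x₀, hx₀⟩ (fun _ prev => F prev) k
  refine ⟨fun k => Classical.choose (step (xs (k-1)).1 (xs (k-1)).2),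
    fun k => (xs k).1, rfl, fun k => rfl, fun k => Xseq_subset_K A B K r (xs k).2⟩

lemma exists_fixed {n p : ℕ} (A : Matrix (Fin n) (Fin n) (WithBot ℤ))
    (B : Matrix (Fin n) (Fin p) (WithBot ℤ)) {K : Set (Fin n → WithBot ℤ)}
    (hK : IsSubsemimodule K) (hfin : vol K ≠ ⊤) :
    ∃ r : ℕ, (r : ℕ∞) ≤ vol K ∧ XseqMax A B K (r+1) = XseqMax A B K r := by
  have hfinK : (unitSet K).Finite := Set.encard_ne_top_iff.mp hfin
  set N := (unitSet K).ncard with hNdef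
  have hvol : vol K = (N : ℕ∞) := by rw [vol_eq_encard, hNdef, hfinK.cast_ncard_eq]
  by_contra hcon
  push_neg at hcon
  have hmono : ∀ r, unitSet (XseqMax A B K r) ⊆ unitSet K :=
    fun r x hx => ⟨Xseq_subset_K A B K r hx.1, hx.2⟩
  have hfinr : ∀ r, (unitSet (XseqMax A B K r)).Finite := fun r => hfinK.subset (hmono r)
  have key : ∀ r, r ≤ N + 1 → (unitSet (XseqMax A B K r)).ncard + r ≤ N := by
    intro r
    induction r with
    | zero => intro _; simpa using Set.ncard_le_ncard (hmono 0) hfinK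
    | succ r ih =>
      intro hr
      have hIH := ih (Nat.le_of_succ_le hr)
      have hne := hcon r (by rw [hvol]; exact_mod_cast Nat.le_of_succ_le_succ hr)
      have hUne : unitSet (XseqMax A B K (r+1)) ≠ unitSet (XseqMax A B K r) :=
        fun hEq => hne (eq_of_unit_eq (Xseq_subsemimodule A B hK (r+1))
          (Xseq_subsemimodule A B hK r) (Xseq_succ_subset A B K r) hEq)
      have hUsub : unitSet (XseqMax A B K (r+1)) ⊆ unitSet (XseqMax A B K r) :=
        fun x hx => ⟨Xseq_succ_subset A B K r hx.1, hx.2⟩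
      have := Set.ncard_lt_ncard (hUsub.ssubset_of_ne hUne) (hfinr r)
      omega
  have := key (N+1) le_rfl
  omega
/-- If `K ⊆ ℤ_max^n` is a subsemimodule with finite volume, then for all matrices
`A`, `B`, the maximal geometrically `(A,B)`-invariant semimodule `K*` contained in
`K` is finitely generated; moreover there exists `k ≤ vol(K)+1` with
`X_{k+1} = X_k` and `K* = X_k`, where `X₁ = K` and `X_{r+1} = φ(X_r)`. -/
theorem kstar_finite_volume {n p : ℕ} (K : Set (Fin n → WithBot ℤ))
    (hK : IsSubsemimodule K) (hfin : vol K ≠ ⊤)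
    (A : Matrix (Fin n) (Fin n) (WithBot ℤ)) (B : Matrix (Fin n) (Fin p) (WithBot ℤ)) :
    (∃ G : Set (Fin n → WithBot ℤ), G.Finite ∧ KstarMax A B K = maxSpan G) ∧
    ∃ k : ℕ, 1 ≤ k ∧ (k : ℕ∞) ≤ vol K + 1 ∧
      XseqMax A B K k = XseqMax A B K (k - 1) ∧
      KstarMax A B K = XseqMax A B K (k - 1) := by
  obtain ⟨r, hrle, hfix⟩ := exists_fixed A B hK hfin
  have hXK : KstarMax A B K = XseqMax A B K r :=
    Set.Subset.antisymm (Kstar_subset_Xseq A B K r) (fixed_subset_Kstar A B K hfix)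
  have hfinK : (unitSet K).Finite := Set.encard_ne_top_iff.mp hfin
  constructor
  · refine ⟨unitSet (XseqMax A B K r),
      hfinK.subset (fun x hx => ⟨Xseq_subset_K A B K r hx.1, hx.2⟩), ?_⟩
    rw [hXK]
    exact eq_span_unit (Xseq_subsemimodule A B hK r)
  · refine ⟨r + 1, Nat.le_add_left 1 r, ?_, ?_, ?_⟩
    · push_cast
      exact add_le_add_left hrle 1
    · simpa using hfix
    · simpa using hXK
end
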